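/- Let r ≥ k+1 and let m' have the cascade representation m' = Σ_{j=s}^{r} C(m_j, j) with 1 ≤ s ≤ m_s < m_{s+1} < ⋯ < m_r ≤ 2k. Then Σ_{j=s}^{r} C(m_j, j−1) > m'. -/

import Mathlib

open Finset

variable {V : Type*} [Fintype V] [DecidableEq V]

/-- Out-degree of `v` in the digraph given by `D`. -/
def outDeg (D : V → V → Bool) (v : V) : ℕ :=
  (Finset.univ.filter (fun w => D v w = true)).card

/-- In-degree of `v` in the digraph given by `D`. -/
def inDeg (D : V → V → Bool) (v : V) : ℕ :=
  (Finset.univ.filter (fun w => D w v = true)).card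

/-- `D` is an orientation of the simple graph `G`: every arc of `D` is an edge of `G`,
and every edge of `G` receives exactly one of the two directions. -/
def IsOrientation (G : SimpleGraph V) (D : V → V → Bool) : Prop :=
  (∀ v w, D v w = true → G.Adj v w) ∧ ∀ v w, G.Adj v w → (D v w = true ↔ D w v = false)

/-- An Eulerian orientation: an orientation with in-degree equal to out-degree everywhere. -/
def IsEulerianOrientation (G : SimpleGraph V) (D : V → V → Bool) : Prop :=
  IsOrientation G D ∧ ∀ v, inDeg D v = outDeg D v

/-- Number of arcs of `D` going from `A` to `B`. -/
def arcs (D : V → V → Bool) (A B : Finset V) : ℕ :=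
  ((A ×ˢ B).filter (fun p => D p.1 p.2 = true)).card

/-- The digraph `D` is strongly connected on the vertex set `A`. -/
def StronglyConnectedOn (D : V → V → Bool) (A : Finset V) : Prop :=
  ∀ v ∈ A, ∀ w ∈ A,
    Relation.ReflTransGen (fun a b => a ∈ A ∧ b ∈ A ∧ D a b = true) v w

/-- The digraph `D` is strongly `k`-vertex-connected: it has at least `k+1` vertices and
deleting any set of at most `k-1` vertices leaves a strongly connected digraph. -/
def StronglyKConnected (k : ℕ) (D : V → V → Bool) : Prop :=
  k + 1 ≤ Fintype.card V ∧
    ∀ Z : Finset V, Z.card ≤ k - 1 → StronglyConnectedOn D (Finset.univ \ Z)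

/-- The `d`-dimensional hypercube graph on vertex set `Fin d → Bool`. -/
def cube (d : ℕ) : SimpleGraph (Fin d → Bool) where
  Adj v w := (Finset.univ.filter (fun i => v i ≠ w i)).card = 1
  symm := by
    constructor
    intro v w h
    show (Finset.univ.filter (fun i => w i ≠ v i)).card = 1
    have he : (Finset.univ.filter (fun i => w i ≠ v i))
        = (Finset.univ.filter (fun i => v i ≠ w i)) := by
      apply Finset.filter_congr; intro i _; simp [ne_comm]
    rw [he]; exact h
  loopless := by constructor; intro v h; simp at h

/-- Number of external neighbors of the vertex set `S` in `G`. -/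
noncomputable def extNbrCard (G : SimpleGraph V) (S : Finset V) : ℕ :=
  {w | w ∉ S ∧ ∃ v ∈ S, G.Adj v w}.ncard

/-- Harper's vertex-isoperimetric quantity `b_v(m, Q_{2k})`: the minimum number of external
neighbors over all vertex sets of size `m` in the hypercube `Q_{2k}`. -/
noncomputable def bv (k m : ℕ) : ℕ :=
  sInf {n | ∃ S : Finset (Fin (2 * k) → Bool), S.card = m ∧ extNbrCard (cube (2 * k)) S = n}


private lemma chooseIncr {n c : ℕ} (h : 2*c+1 ≤ n) : Nat.choose n c ≤ Nat.choose n (c+1) := by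
  have h2 : Nat.choose n c * (c+1) ≤ Nat.choose n c * (n - c) :=
    Nat.mul_le_mul_left _ (by omega)
  rw [← Nat.choose_succ_right_eq] at h2
  exact Nat.le_of_mul_le_mul_right h2 (by omega)

private lemma chooseIncrS {n c : ℕ} (h : 2*c+2 ≤ n) : Nat.choose n c < Nat.choose n (c+1) := by
  have hpos : 0 < Nat.choose n c := Nat.choose_pos (by omega)
  have h2 : Nat.choose n c * (c+1) < Nat.choose n c * (n - c) :=
    (Nat.mul_lt_mul_left hpos).mpr (by omega)
  rw [← Nat.choose_succ_right_eq] at h2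
  exact Nat.lt_of_mul_lt_mul_right h2

private lemma chooseDecr {n c : ℕ} (h : n ≤ 2*c+1) : Nat.choose n (c+1) ≤ Nat.choose n c := by
  have h2 : Nat.choose n (c+1) * (c+1) ≤ Nat.choose n c * (c+1) := by
    rw [Nat.choose_succ_right_eq]
    exact Nat.mul_le_mul_left _ (by omega)
  exact Nat.le_of_mul_le_mul_right h2 (by omega)

private lemma chooseDecrS {n c : ℕ} (h1 : c+1 ≤ n) (h2 : n ≤ 2*c) :
    Nat.choose n (c+1) < Nat.choose n c := by
  have hpos : 0 < Nat.choose n c := Nat.choose_pos (by omega)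
  have h3 : Nat.choose n (c+1) * (c+1) < Nat.choose n c * (c+1) := by
    rw [Nat.choose_succ_right_eq]
    calc Nat.choose n c * (n - c) ≤ Nat.choose n c * c :=
          Nat.mul_le_mul_left _ (by omega)
      _ < Nat.choose n c * (c+1) := (Nat.mul_lt_mul_left hpos).mpr (by omega)
  exact Nat.lt_of_mul_lt_mul_right h3

private lemma chooseMonoHalf {a b n : ℕ} (hab : a ≤ b) (h : 2*b ≤ n) :
    Nat.choose n a ≤ Nat.choose n b := by
  induction b, hab using Nat.le_induction with
  | base => exact le_refl _
  | succ b hb ih =>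
      exact le_trans (ih (by omega)) (chooseIncr (by omega))

private lemma chooseMono {a b n : ℕ} (hab : a ≤ b) (h : a + b ≤ n) :
    Nat.choose n a ≤ Nat.choose n b := by
  by_cases hb : 2*b ≤ n
  · exact chooseMonoHalf hab hb
  · have hbn : b ≤ n := by omega
    rw [← Nat.choose_symm hbn]
    exact chooseMonoHalf (by omega) (by omega)

private lemma chooseChain {u m M : ℕ} (h : 2*u ≤ m) (hM : m ≤ M) :
    Nat.choose m (u+1) + Nat.choose M u ≤ Nat.choose m u + Nat.choose M (u+1) := by
  induction M, hM using Nat.le_induction with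
  | base => omega
  | succ M hM ih =>
      match u with
      | 0 => simp [Nat.choose_one_right]; omega
      | v+1 =>
          have p1 : Nat.choose (M+1) (v+1) = Nat.choose M v + Nat.choose M (v+1) :=
            Nat.choose_succ_succ M v
          have p2 : Nat.choose (M+1) (v+1+1) = Nat.choose M (v+1) + Nat.choose M (v+1+1) :=
            Nat.choose_succ_succ M (v+1)
          have hinc : Nat.choose M v ≤ Nat.choose M (v+1) := chooseIncr (by omega)
          omega

private lemma chooseBump {u m : ℕ} (h : 2*u+2 ≤ m) :
    Nat.choose m (u+1) + Nat.choose (m+1) u + 1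
      ≤ Nat.choose m u + Nat.choose (m+1) (u+1) := by
  match u, h with
  | 0, h => simp [Nat.choose_one_right]
  | v+1, h =>
      have p1 : Nat.choose (m+1) (v+1+1) = Nat.choose m (v+1) + Nat.choose m (v+1+1) :=
        Nat.choose_succ_succ m (v+1)
      have p2 : Nat.choose (m+1) (v+1) = Nat.choose m v + Nat.choose m (v+1) :=
        Nat.choose_succ_succ m v
      have hinc : Nat.choose m v < Nat.choose m (v+1) := chooseIncrS (by omega)
      omega

private lemma chooseBumpChain {u m M : ℕ} (h : 2*u+2 ≤ m) (hM : m < M) :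
    Nat.choose m (u+1) + Nat.choose M u + 1
      ≤ Nat.choose m u + Nat.choose M (u+1) := by
  have h1 := chooseBump h
  have h2 : Nat.choose (m+1) (u+1) + Nat.choose M u
      ≤ Nat.choose (m+1) u + Nat.choose M (u+1) := chooseChain (by omega) (by omega)
  omega

private lemma chooseSwap {v m M : ℕ} (h : 2*v+2 ≤ m+1) (hM : m+1 ≤ M) :
    Nat.choose m (v+1+1) + Nat.choose M (v+1)
      ≤ Nat.choose m v + Nat.choose M (v+1+1) := by
  have hc : Nat.choose (m+1) (v+1+1) + Nat.choose M (v+1)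
      ≤ Nat.choose (m+1) (v+1) + Nat.choose M (v+1+1) := chooseChain (by omega) hM
  have p1 : Nat.choose (m+1) (v+1) = Nat.choose m v + Nat.choose m (v+1) :=
    Nat.choose_succ_succ m v
  have p2 : Nat.choose (m+1) (v+1+1) = Nat.choose m (v+1) + Nat.choose m (v+1+1) :=
    Nat.choose_succ_succ m (v+1)
  omega

private lemma icc_split {t r : ℕ} (h : t ≤ r) (g : ℕ → ℕ) :
    ∑ j ∈ Finset.Icc t r, g j = g t + ∑ j ∈ Finset.Icc (t+1) r, g j := by
  have he : Finset.Icc t r = insert t (Finset.Icc (t+1) r) := by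
    ext x; simp [Finset.mem_Icc]; omega
  rw [he, Finset.sum_insert (by simp)]

/-- The lower-shadow inequality for the cascade representation:
if `r ≥ k+1` and `m' = Σ_{j=s}^r C(m_j, j)` with `1 ≤ s ≤ m_s < ⋯ < m_r ≤ 2k`,
then `Σ_{j=s}^r C(m_j, j-1) > m'`. -/
theorem stmt9 (k r s : ℕ) (f : ℕ → ℕ) (hk : 1 ≤ k) (hs : 1 ≤ s) (hsr : s ≤ r)
    (hr : k + 1 ≤ r) (hfs : s ≤ f s)
    (hmono : ∀ j, s ≤ j → j < r → f j < f (j + 1))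
    (htop : f r ≤ 2 * k) :
    ∑ j ∈ Finset.Icc s r, Nat.choose (f j) j
      < ∑ j ∈ Finset.Icc s r, Nat.choose (f j) (j - 1) := by
  -- f j ≥ j on [s, r]
  have hfj : ∀ j, s ≤ j → j ≤ r → j ≤ f j := by
    intro j hj
    induction j, hj using Nat.le_induction with
    | base => intro _; exact hfs
    | succ j hj ih =>
        intro hjr
        have h1 := ih (by omega)
        have h2 := hmono j hj (by omega)
        omega
  -- main downward induction
  have main : ∀ n t, s ≤ t → t ≤ r → r - t = n →
      ((∑ j ∈ Finset.Icc t r, Nat.choose (f j) j)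
          < ∑ j ∈ Finset.Icc t r, Nat.choose (f j) (j-1)) ∧
      ((∑ j ∈ Finset.Icc t r, Nat.choose (f j) j) + Nat.choose (f t) (t-1)
          ≤ (∑ j ∈ Finset.Icc t r, Nat.choose (f j) (j-1)) + Nat.choose (f t) (t-2)) := by
    intro n
    induction n with
    | zero =>
        intro t hst htr hn
        have ht : r = t := by omega
        subst ht
        rw [Finset.Icc_self, Finset.sum_singleton, Finset.sum_singleton]
        have hfr : r ≤ f r := hfj r hst (le_refl _)
        have hfr2 : f r ≤ 2*r - 2 := by omega
        obtain ⟨c, rfl⟩ : ∃ c, r = c + 1 := ⟨r - 1, by omega⟩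
        have hP1 : Nat.choose (f (c+1)) (c+1) < Nat.choose (f (c+1)) c :=
          chooseDecrS (by omega) (by omega)
        constructor
        · simpa using hP1
        · -- need C (f r) r ≤ C (f r) (r-2)
          obtain ⟨d, rfl⟩ : ∃ d, c = d + 1 := ⟨c - 1, by omega⟩
          have hsym : Nat.choose (f (d+1+1)) (f (d+1+1) - (d+1+1))
              = Nat.choose (f (d+1+1)) (d+1+1) :=
            Nat.choose_symm (by omega)
          have hmon : Nat.choose (f (d+1+1)) (f (d+1+1) - (d+1+1))
              ≤ Nat.choose (f (d+1+1)) d :=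
            chooseMono (by omega) (by omega)
          have e5 : d + 1 + 1 - 1 = d + 1 := by omega
          have e6 : d + 1 + 1 - 2 = d := by omega
          rw [e5, e6]
          omega
    | succ n ih =>
        intro t hst htr hn
        have htr' : t < r := by omega
        obtain ⟨ihP1, ihP2⟩ := ih (t+1) (by omega) (by omega) (by omega)
        have hsplit1 := icc_split (le_of_lt htr') (fun j => Nat.choose (f j) j)
        have hsplit2 := icc_split (le_of_lt htr') (fun j => Nat.choose (f j) (j-1))
        set S := ∑ j ∈ Finset.Icc (t+1) r, Nat.choose (f j) j with hS
        set S' := ∑ j ∈ Finset.Icc (t+1) r, Nat.choose (f j) (j-1) with hS'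
        have hmM : f t < f (t+1) := hmono t hst htr'
        have htm : t ≤ f t := hfj t hst (by omega)
        obtain ⟨u, rfl⟩ : ∃ u, t = u + 1 := ⟨t - 1, by omega⟩
        -- normalize indices
        have e1 : u + 1 - 1 = u := by omega
        have e2 : u + 1 + 1 - 1 = u + 1 := by omega
        have e3 : u + 1 + 1 - 2 = u := by omega
        rw [e2, e3] at ihP2
        rw [hsplit1, hsplit2, e1]
        set m := f (u+1) with hm
        set M := f (u+1+1) with hM
        -- P1
        have hP1 : Nat.choose m (u+1) + S < Nat.choose m u + S' := by
          by_cases hcase : 2*(u+1) ≤ m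
          · -- bump+chain with P2(t+1)
            have hb : Nat.choose m (u+1) + Nat.choose M u + 1
                ≤ Nat.choose m u + Nat.choose M (u+1) :=
              chooseBumpChain (by omega) hmM
            omega
          · have hd : Nat.choose m (u+1) ≤ Nat.choose m u := chooseDecr (by omega)
            omega
        refine ⟨hP1, ?_⟩
        -- P2
        by_cases hu : u = 0
        · subst hu
          have e4 : 0 + 1 - 2 = 0 := by omega
          rw [e4]
          omega
        · obtain ⟨v, rfl⟩ : ∃ v, u = v + 1 := ⟨u - 1, by omega⟩
          have e4 : v + 1 + 1 - 2 = v := by omega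
          rw [e4]
          by_cases hcase : 2*(v+1)+2 ≤ m+3
          · have hsw : Nat.choose m (v+1+1) + Nat.choose M (v+1)
                ≤ Nat.choose m v + Nat.choose M (v+1+1) :=
              chooseSwap (by omega) (by omega)
            omega
          · -- m ≤ 2v: two decreasing steps
            have hd1 : Nat.choose m (v+1+1) ≤ Nat.choose m (v+1) := chooseDecr (by omega)
            have hd2 : Nat.choose m (v+1) ≤ Nat.choose m v := chooseDecr (by omega)
            omega
  exact (main (r - s) s (le_refl _) hsr rfl).1
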